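/- Let V be an N-dimensional complex vector space and V^{m,n} = V^{⊗m} ⊗ (V*)^{⊗n}. The endomorphism 𝒜_{m,n} = Σ_{a,b'} τ_{ab'}, where τ_{ab'} is insertion-after-contraction of the a-th V factor with the b'-th V* factor, is diagonalizable. -/

import Mathlib

open scoped BigOperators

noncomputable section

/-- Mixed tensors of valence (m,n) on an N-dimensional space, given by components. -/
abbrev Tens (N m n : ℕ) := (Fin m → Fin N) → (Fin n → Fin N) → ℂ

namespace Mixed

variable (N : ℕ)

/-- The contraction (trace) map `tr_{ab'}` contracting the a-th contravariant slot
with the b-th covariant slot. -/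
def trMap (m n : ℕ) (a : Fin (m+1)) (b : Fin (n+1)) :
    Tens N (m+1) (n+1) →ₗ[ℂ] Tens N m n where
  toFun t := fun i j => ∑ k : Fin N, t (a.insertNth k i) (b.insertNth k j)
  map_add' t s := by funext i j; simp [Finset.sum_add_distrib]
  map_smul' c t := by funext i j; simp [Finset.mul_sum]

/-- The insertion map `tr⁺_{ab'}` inserting the canonical invariant `∑ᵢ eᵢ ⊗ eⁱ`
at positions a and b. -/
def insMap (m n : ℕ) (a : Fin (m+1)) (b : Fin (n+1)) :
    Tens N m n →ₗ[ℂ] Tens N (m+1) (n+1) where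
  toFun t := fun i j =>
    if i a = j b then t (fun x => i (a.succAbove x)) (fun y => j (b.succAbove y)) else 0
  map_add' t s := by funext i j; by_cases h : i a = j b <;> simp [h]
  map_smul' c t := by funext i j; by_cases h : i a = j b <;> simp [h]

/-- `τ_{ab'} = tr⁺_{ab'} ∘ tr_{ab'}`. -/
def tau (m n : ℕ) (a : Fin (m+1)) (b : Fin (n+1)) :
    Module.End ℂ (Tens N (m+1) (n+1)) :=
  (insMap N m n a b).comp (trMap N m n a b)

/-- `𝒜_{m,n} = ∑_{a,b'} τ_{ab'}`. -/
def AOp (m n : ℕ) : Module.End ℂ (Tens N (m+1) (n+1)) :=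
  ∑ a : Fin (m+1), ∑ b : Fin (n+1), tau N m n a b

/-- The traceless subspace: common kernel of all contractions. -/
def traceless (m n : ℕ) : Submodule ℂ (Tens N (m+1) (n+1)) :=
  ⨅ a : Fin (m+1), ⨅ b : Fin (n+1), LinearMap.ker (trMap N m n a b)

/-- The span of the images of all insertion maps. -/
def traceSpan (m n : ℕ) : Submodule ℂ (Tens N (m+1) (n+1)) :=
  ⨆ a : Fin (m+1), ⨆ b : Fin (n+1), LinearMap.range (insMap N m n a b)

end Mixed

namespace AmnProof

open Mixed

/-- Euclidean model of the tensor space. -/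
abbrev ET (N m n : ℕ) := EuclideanSpace ℂ ((Fin m → Fin N) × (Fin n → Fin N))

/-- The obvious linear equivalence. -/
def eqv (N m n : ℕ) : Tens N m n ≃ₗ[ℂ] ET N m n :=
  (LinearEquiv.curry ℂ ℂ (Fin m → Fin N) (Fin n → Fin N)).symm.trans
    (WithLp.linearEquiv 2 ℂ _).symm

@[simp] lemma eqv_apply (N m n : ℕ) (t : Tens N m n) (p) :
    eqv N m n t p = t p.1 p.2 := rfl

@[simp] lemma eqv_symm_apply (N m n : ℕ) (x : ET N m n) (i j) :
    (eqv N m n).symm x i j = x (i, j) := rfl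

variable {N m n : ℕ}

/-- The key adjointness computation: `⟪ins s, y⟫ = ⟪s, tr y⟫` in components. -/
lemma ins_adj (a : Fin (m+1)) (b : Fin (n+1)) (s : Tens N m n)
    (y : Tens N (m+1) (n+1)) :
    (∑ i : Fin (m+1) → Fin N, ∑ j : Fin (n+1) → Fin N,
        starRingEnd ℂ (insMap N m n a b s i j) * y i j)
      = ∑ i : Fin m → Fin N, ∑ j : Fin n → Fin N,
        starRingEnd ℂ (s i j) * trMap N m n a b y i j := by
  have hreI : ∀ F : (Fin (m+1) → Fin N) → ℂ,
      (∑ i : Fin (m+1) → Fin N, F i)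
        = ∑ k : Fin N, ∑ i' : Fin m → Fin N, F (a.insertNth k i') := by
    intro F
    rw [← (Fin.insertNthEquiv (fun _ => Fin N) a).sum_comp F, Fintype.sum_prod_type]
    rfl
  have hreJ : ∀ F : (Fin (n+1) → Fin N) → ℂ,
      (∑ j : Fin (n+1) → Fin N, F j)
        = ∑ k : Fin N, ∑ j' : Fin n → Fin N, F (b.insertNth k j') := by
    intro F
    rw [← (Fin.insertNthEquiv (fun _ => Fin N) b).sum_comp F, Fintype.sum_prod_type]
    rfl
  rw [hreI]
  simp only [hreJ]
  have key : ∀ (k : Fin N) (i' : Fin m → Fin N),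
      (∑ k' : Fin N, ∑ j' : Fin n → Fin N,
        starRingEnd ℂ (insMap N m n a b s (a.insertNth k i') (b.insertNth k' j'))
          * y (a.insertNth k i') (b.insertNth k' j'))
        = ∑ j' : Fin n → Fin N,
            starRingEnd ℂ (s i' j') * y (a.insertNth k i') (b.insertNth k j') := by
    intro k i'
    rw [Finset.sum_comm]
    refine Finset.sum_congr rfl fun j' _ => ?_
    rw [Finset.sum_eq_single k]
    · simp [insMap, Fin.insertNth_apply_same, Fin.insertNth_apply_succAbove]
    · intro k' _ hk'
      simp [insMap, Fin.insertNth_apply_same, Ne.symm hk']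
    · simp
  simp only [key]
  rw [Finset.sum_comm]
  refine Finset.sum_congr rfl fun i' _ => ?_
  rw [Finset.sum_comm]
  refine Finset.sum_congr rfl fun j' _ => ?_
  simp [trMap, Finset.mul_sum]

/-- Each conjugated `τ` is symmetric. -/
lemma tau_isSymmetric (a : Fin (m+1)) (b : Fin (n+1)) :
    (((eqv N (m+1) (n+1)).conj (tau N m n a b)) :
        Module.End ℂ (ET N (m+1) (n+1))).IsSymmetric := by
  intro x y
  have hx : ∀ z : ET N (m+1) (n+1),
      ((eqv N (m+1) (n+1)).conj (tau N m n a b)) z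
        = eqv N (m+1) (n+1)
            (insMap N m n a b (trMap N m n a b ((eqv N (m+1) (n+1)).symm z))) := by
    intro z; simp [LinearEquiv.conj_apply_apply, tau]
  have inner_def : ∀ u v : ET N (m+1) (n+1),
      (inner ℂ u v : ℂ) = ∑ i : Fin (m+1) → Fin N, ∑ j : Fin (n+1) → Fin N,
        starRingEnd ℂ (u (i, j)) * v (i, j) := by
    intro u v
    rw [PiLp.inner_apply, Fintype.sum_prod_type]
    simp [RCLike.inner_apply, mul_comm]
  rw [hx, hx, inner_def, inner_def]
  have h1 := ins_adj a b (trMap N m n a b ((eqv N (m+1) (n+1)).symm x))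
    ((eqv N (m+1) (n+1)).symm y)
  have h2 := ins_adj a b (trMap N m n a b ((eqv N (m+1) (n+1)).symm y))
    ((eqv N (m+1) (n+1)).symm x)
  simp only [eqv_symm_apply] at h1 h2
  simp only [eqv_apply]
  rw [h1]
  calc (∑ i : Fin m → Fin N, ∑ j : Fin n → Fin N,
        starRingEnd ℂ (trMap N m n a b ((eqv N (m+1) (n+1)).symm x) i j)
          * trMap N m n a b ((eqv N (m+1) (n+1)).symm y) i j)
      = starRingEnd ℂ (∑ i : Fin m → Fin N, ∑ j : Fin n → Fin N,
        starRingEnd ℂ (trMap N m n a b ((eqv N (m+1) (n+1)).symm y) i j)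
          * trMap N m n a b ((eqv N (m+1) (n+1)).symm x) i j) := by
        simp only [map_sum, map_mul, Complex.conj_conj]
        exact Finset.sum_congr rfl fun _ _ => Finset.sum_congr rfl fun _ _ => mul_comm _ _
    _ = starRingEnd ℂ (∑ i : Fin (m+1) → Fin N, ∑ j : Fin (n+1) → Fin N,
        starRingEnd ℂ (insMap N m n a b
            (trMap N m n a b ((eqv N (m+1) (n+1)).symm y)) i j) * x (i, j)) := by
        rw [h2]
    _ = _ := by
        simp only [map_sum, map_mul, Complex.conj_conj]
        exact Finset.sum_congr rfl fun _ _ => Finset.sum_congr rfl fun _ _ => mul_comm _ _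

set_option synthInstance.maxHeartbeats 1000000 in
lemma AOp_conj_isSymmetric (N m n : ℕ) :
    (((eqv N (m+1) (n+1)).conj (AOp N m n)) :
        Module.End ℂ (ET N (m+1) (n+1))).IsSymmetric := by
  intro x y
  have hx : ∀ z : ET N (m+1) (n+1),
      ((eqv N (m+1) (n+1)).conj (AOp N m n)) z
        = ∑ a : Fin (m+1), ∑ b : Fin (n+1),
            ((eqv N (m+1) (n+1)).conj (tau N m n a b)) z := by
    intro z
    simp [AOp, LinearEquiv.conj_apply_apply, LinearMap.sum_apply, map_sum]
  rw [hx, hx]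
  simp only [inner_sum, sum_inner]
  exact Finset.sum_congr rfl fun a _ => Finset.sum_congr rfl fun b _ =>
    tau_isSymmetric a b x y

lemma eigenspace_conj (e : Tens N (m+1) (n+1) ≃ₗ[ℂ] ET N (m+1) (n+1))
    (f : Module.End ℂ (Tens N (m+1) (n+1))) (μ : ℂ) :
    Module.End.eigenspace (e.conj f) μ
      = (Module.End.eigenspace f μ).map e.toLinearMap := by
  ext x
  simp only [Module.End.mem_eigenspace_iff, Submodule.mem_map]
  constructor
  · intro hx
    refine ⟨e.symm x, ?_, by simp⟩
    apply e.injective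
    simpa [LinearEquiv.conj_apply_apply, map_smul] using hx
  · rintro ⟨v, hv, rfl⟩
    simp [LinearEquiv.conj_apply_apply, hv]

end AmnProof

/-- the endomorphism `𝒜_{m,n} = ∑_{a,b'} τ_{ab'}` of the mixed tensor
product V^{m,n} (dim V = N; here m,n ≥ 1 are encoded as m+1 and n+1 factors)
is diagonalizable. -/
theorem Amn_diagonalizable (N m n : ℕ) :
    (⨆ μ : ℂ, Module.End.eigenspace (Mixed.AOp N m n) μ) = ⊤ := by
  set e := AmnProof.eqv N (m+1) (n+1)
  have hsym := AmnProof.AOp_conj_isSymmetric N m n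
  have htop : (⨆ μ : ℂ, Module.End.eigenspace (e.conj (Mixed.AOp N m n)) μ) = ⊤ := by
    rw [← Submodule.orthogonal_eq_bot_iff]
    exact hsym.orthogonalComplement_iSup_eigenspaces_eq_bot
  have hmap : ∀ μ : ℂ, Module.End.eigenspace (e.conj (Mixed.AOp N m n)) μ
      = (Module.End.eigenspace (Mixed.AOp N m n) μ).map e.toLinearMap :=
    AmnProof.eigenspace_conj e (Mixed.AOp N m n)
  have : ((⨆ μ : ℂ, Module.End.eigenspace (Mixed.AOp N m n) μ).map
      e.toLinearMap) = ⊤ := by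
    rw [Submodule.map_iSup]
    simpa [hmap] using htop
  have hinj : Function.Injective e.toLinearMap := e.injective
  apply Submodule.map_injective_of_injective hinj
  rw [this, Submodule.map_top]
  exact (LinearMap.range_eq_top.mpr e.surjective).symm
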